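/- Under the random annex model, the expected size of the intersection of the union of s extended generations with another extended generation equals g(1 - (1-π)^s) + s·h·π·(1-π)^s, where g = h + l and π = l/((n-1)h). -/

import Mathlib

lemma aux_piFilter {n : ℕ} {α : Type*} [DecidableEq α] (A : Fin n → Finset (Finset α))
    (p : Fin n → Finset α → Prop) [∀ i t, Decidable (p i t)] :
    ((Fintype.piFinset A).filter (fun R => ∀ i, p i (R i))).card
      = ∏ i, ((A i).filter (p i)).card := by
  rw [← Fintype.card_piFinset]
  congr 1
  ext R
  simp [Fintype.mem_piFinset, Finset.mem_filter, forall_and]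

lemma aux_split {α : Type*} (F : Finset α) (q p : α → Prop)
    [DecidablePred q] [DecidablePred p] :
    (F.filter (fun x => q x ∧ p x)).card + (F.filter (fun x => q x ∧ ¬ p x)).card
      = (F.filter q).card := by
  rw [← Finset.filter_filter, ← Finset.filter_filter]
  exact Finset.card_filter_add_card_filter_not _

lemma aux_count_not {α : Type*} [DecidableEq α] (S : Finset α) (x : α) (hx : x ∈ S) (l : ℕ) :
    ((S.powersetCard l).filter (fun T => x ∉ T)).card = (S.card - 1).choose l := by
  have h : (S.powersetCard l).filter (fun T => x ∉ T) = (S.erase x).powersetCard l := by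
    ext T
    simp only [Finset.mem_filter, Finset.mem_powersetCard, Finset.subset_erase]
    tauto
  rw [h, Finset.card_powersetCard, Finset.card_erase_of_mem hx]

lemma aux_count_mem {α : Type*} [DecidableEq α] (S : Finset α) (x : α) (hx : x ∈ S) (l : ℕ)
    (hl : 1 ≤ l) :
    ((S.powersetCard l).filter (fun T => x ∈ T)).card = (S.card - 1).choose (l - 1) := by
  have h1 := Finset.card_filter_add_card_filter_not (s := S.powersetCard l)
    (p := fun T => x ∈ T)
  rw [Finset.card_powersetCard] at h1
  have h2 : ((S.powersetCard l).filter (fun T => ¬ x ∈ T)).card = (S.card - 1).choose l :=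
    aux_count_not S x hx l
  have hcpos : 0 < S.card := Finset.card_pos.mpr ⟨x, hx⟩
  have hrec := Nat.choose_succ_succ (S.card - 1) (l - 1)
  have e1 : S.card - 1 + 1 = S.card := by omega
  have e2 : l - 1 + 1 = l := by omega
  rw [Nat.succ_eq_add_one, Nat.succ_eq_add_one, e1, e2] at hrec
  omega

lemma aux_prod (n s : ℕ) (hs : s < n) (a b c : ℕ) :
    (∏ i : Fin n, (if (i : ℕ) < s then b else if (i : ℕ) = s then a else c))
      = b ^ s * (a * c ^ (n - 1 - s)) := by
  rw [Fin.prod_univ_eq_prod_range (fun i => if i < s then b else if i = s then a else c)]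
  rw [← Finset.prod_range_mul_prod_Ico _ hs.le]
  rw [Finset.prod_eq_prod_Ico_succ_bot hs]
  have h1 : ∏ i ∈ Finset.range s, (if i < s then b else if i = s then a else c) = b ^ s := by
    rw [Finset.prod_congr rfl (fun i hi => by
      rw [if_pos (Finset.mem_range.mp hi)]), Finset.prod_const, Finset.card_range]
  have h2 : ∏ i ∈ Finset.Ico (s+1) n, (if i < s then b else if i = s then a else c)
      = c ^ (n - 1 - s) := by
    rw [Finset.prod_congr rfl (fun i hi => by
      have := Finset.mem_Ico.mp hi
      rw [if_neg (by omega), if_neg (by omega)]), Finset.prod_const, Nat.card_Ico]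
    congr 1; omega
  rw [h1, h2, if_neg (by omega), if_pos rfl]

lemma aux_sum (n s : ℕ) (hs : s < n) (a b c : ℕ) :
    (∑ i : Fin n, (if (i : ℕ) < s then b else if (i : ℕ) = s then a else c))
      = s * b + (a + (n - 1 - s) * c) := by
  rw [Fin.sum_univ_eq_sum_range (fun i => if i < s then b else if i = s then a else c)]
  rw [← Finset.sum_range_add_sum_Ico _ hs.le]
  rw [Finset.sum_eq_sum_Ico_succ_bot hs]
  have h1 : ∑ i ∈ Finset.range s, (if i < s then b else if i = s then a else c) = s * b := by
    rw [Finset.sum_congr rfl (fun i hi => by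
      rw [if_pos (Finset.mem_range.mp hi)]), Finset.sum_const, Finset.card_range, smul_eq_mul]
  have h2 : ∑ i ∈ Finset.Ico (s+1) n, (if i < s then b else if i = s then a else c)
      = (n - 1 - s) * c := by
    rw [Finset.sum_congr rfl (fun i hi => by
      have := Finset.mem_Ico.mp hi
      rw [if_neg (by omega), if_neg (by omega)]), Finset.sum_const, Nat.card_Ico, smul_eq_mul]
    congr 1; omega
  rw [h1, h2, if_neg (by omega), if_pos rfl]

/-- Random annex model: `N = n·h` packets, base generations `B i` of size `h`
partitioning the packets, annexes chosen independently and uniformly among the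
`l`-subsets of the complement of the corresponding base generation.  The expected
size of the intersection of the union of the first `s` extended generations with the
`(s+1)`-th one equals `g(1-(1-π)^s) + s·h·π·(1-π)^s`, where `g = h + l` and
`π = l/((n-1)h)`. -/
theorem stmt_5 (n h l s : ℕ) (hn : 2 ≤ n) (hh : 0 < h) (hl : l ≤ (n - 1) * h)
    (hs : s < n)
    (B : Fin n → Finset (Fin (n * h))) (hBcard : ∀ i, (B i).card = h)
    (hBdisj : ∀ i j, i ≠ j → Disjoint (B i) (B j)) :
    let π : ℝ := (l : ℝ) / (((n : ℝ) - 1) * (h : ℝ))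
    let Ω : Finset (Fin n → Finset (Fin (n * h))) :=
      Finset.univ.filter fun R => ∀ i, R i ⊆ (B i)ᶜ ∧ (R i).card = l
    (∑ R ∈ Ω,
        ((((Finset.univ.filter fun i : Fin n => (i : ℕ) < s).biUnion
            (fun i => B i ∪ R i)) ∩ (B ⟨s, hs⟩ ∪ R ⟨s, hs⟩)).card : ℝ)) / (Ω.card : ℝ)
      = ((h : ℝ) + l) * (1 - (1 - π) ^ s) + (s : ℝ) * h * π * (1 - π) ^ s := by
  intro π Ω
  classical
  have hπdef : π = (l : ℝ) / (((n : ℝ) - 1) * (h : ℝ)) := rfl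
  have hΩdef : Ω = Finset.univ.filter fun R => ∀ i, R i ⊆ (B i)ᶜ ∧ (R i).card = l := rfl
  have hmemiff : ∀ (R : Fin n → Finset (Fin (n*h))) (x : Fin (n*h)),
      (x ∈ ((Finset.univ.filter fun i : Fin n => (i : ℕ) < s).biUnion
            (fun i => B i ∪ R i)) ∩ (B ⟨s, hs⟩ ∪ R ⟨s, hs⟩))
      ↔ ((∃ i : Fin n, (i : ℕ) < s ∧ (x ∈ B i ∨ x ∈ R i)) ∧ (x ∈ B ⟨s, hs⟩ ∨ x ∈ R ⟨s, hs⟩)) := by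
    intro R x
    simp [Finset.mem_inter, Finset.mem_biUnion, Finset.mem_filter, Finset.mem_union]
  by_cases hl0 : l = 0
  · -- degenerate case l = 0
    subst hl0
    have hπ0 : π = 0 := by rw [hπdef]; simp
    have hΩ1 : Ω = {fun _ => ∅} := by
      rw [hΩdef]
      ext R
      simp only [Finset.mem_filter, Finset.mem_univ, true_and, Finset.mem_singleton]
      constructor
      · intro hR
        funext i
        exact Finset.card_eq_zero.mp (hR i).2
      · rintro rfl i
        exact ⟨Finset.empty_subset _, rfl⟩
    rw [hΩ1, Finset.sum_singleton, Finset.card_singleton]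
    have hinter : (((Finset.univ.filter fun i : Fin n => (i : ℕ) < s).biUnion
        (fun i => B i ∪ (fun _ : Fin n => (∅ : Finset (Fin (n*h)))) i))
        ∩ (B ⟨s, hs⟩ ∪ (fun _ : Fin n => (∅ : Finset (Fin (n*h)))) ⟨s, hs⟩)) = ∅ := by
      rw [Finset.eq_empty_iff_forall_notMem]
      intro x hx
      obtain ⟨⟨i, hi, hxi⟩, hx2⟩ := (hmemiff _ x).mp hx
      rcases hxi with hxi | hxi
      · have hij : i ≠ ⟨s, hs⟩ := by
          intro he
          rw [he] at hi
          exact absurd hi (lt_irrefl s)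
        rcases hx2 with hx2 | hx2
        · exact (Finset.disjoint_left.mp (hBdisj i ⟨s, hs⟩ hij) hxi) hx2
        · exact absurd hx2 (Finset.notMem_empty x)
      · exact absurd hxi (Finset.notMem_empty x)
    rw [hinter]
    simp [hπ0]
  · -- main case : 1 ≤ l
    have hl1 : 1 ≤ l := by omega
    -- small arithmetic facts, established early (omega is unusable later on)
    have hn1 : 1 ≤ n := by omega
    have hsle : s ≤ n - 1 := by omega
    set m := (n - 1) * h with hm
    have hm1 : 1 ≤ m := by
      have h1 : 1 ≤ n - 1 := by omega
      calc 1 = 1 * 1 := rfl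
        _ ≤ (n - 1) * h := Nat.mul_le_mul h1 hh
    set a := (m - 1).choose (l - 1) with ha
    set b := (m - 1).choose l with hb
    set c := m.choose l with hc
    have e1 : m - 1 + 1 = m := by omega
    have e2 : l - 1 + 1 = l := by omega
    have habc : a + b = c := by
      have h1 := Nat.choose_succ_succ (m - 1) (l - 1)
      rw [Nat.succ_eq_add_one, Nat.succ_eq_add_one, e1, e2] at h1
      omega
    have hcpos : 0 < c := Nat.choose_pos hl
    have hbc : b ≤ c := by omega
    have hexpsum : s + (n - 1 - s + 1) = n := by omega
    have hmac : m * a = c * l := by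
      have h1 := Nat.add_one_mul_choose_eq (m - 1) (l - 1)
      rw [e1, e2] at h1
      exact h1
    have hcompl : ∀ i : Fin n, ((B i)ᶜ : Finset (Fin (n * h))).card = m := by
      intro i
      rw [Finset.card_compl, hBcard, Fintype.card_fin, hm, Nat.sub_mul, one_mul]
    set A : Fin n → Finset (Finset (Fin (n * h))) := fun i => ((B i)ᶜ).powersetCard l with hA
    have hΩpi : Ω = Fintype.piFinset A := by
      rw [hΩdef]
      ext R
      simp only [Finset.mem_filter, Finset.mem_univ, true_and, Fintype.mem_piFinset, hA,
        Finset.mem_powersetCard]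
    have hAcard : ∀ i, (A i).card = c := by
      intro i
      rw [hA]
      rw [Finset.card_powersetCard, hcompl]
    have hΩcard : Ω.card = c ^ n := by
      rw [hΩpi, Fintype.card_piFinset]
      rw [Finset.prod_congr rfl (fun i _ => hAcard i), Finset.prod_const, Finset.card_univ,
        Fintype.card_fin]
    have huniv : Finset.univ.biUnion B = Finset.univ := by
      apply Finset.eq_univ_of_card
      rw [Finset.card_biUnion (fun i _ j _ hij => hBdisj i j hij)]
      rw [Finset.sum_congr rfl (fun i _ => hBcard i), Finset.sum_const, Finset.card_univ,
        Fintype.card_fin, smul_eq_mul, Fintype.card_fin]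
    -- the per-packet count
    have hdx : ∀ (x : Fin (n * h)) (j : Fin n), x ∈ B j →
        (Ω.filter (fun R =>
            x ∈ ((Finset.univ.filter fun i : Fin n => (i : ℕ) < s).biUnion
              (fun i => B i ∪ R i)) ∩ (B ⟨s, hs⟩ ∪ R ⟨s, hs⟩))).card
          = if (j : ℕ) < s then c ^ s * (a * c ^ (n - 1 - s))
            else if (j : ℕ) = s then c ^ n - b ^ s * (c * c ^ (n - 1 - s))
            else c ^ s * (a * c ^ (n - 1 - s)) - b ^ s * (a * c ^ (n - 1 - s)) := by
      intro x j hxj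
      have hxnot : ∀ i : Fin n, i ≠ j → x ∉ B i := fun i hij hxi =>
        (Finset.disjoint_left.mp (hBdisj i j hij) hxi) hxj
      have hxc : ∀ i : Fin n, i ≠ j → x ∈ (B i)ᶜ := fun i hij =>
        Finset.mem_compl.mpr (hxnot i hij)
      have hcnt1 : (⟨s, hs⟩ : Fin n) ≠ j →
          (Ω.filter (fun R => ∀ i : Fin n, i = ⟨s, hs⟩ → x ∈ R i)).card
            = c ^ s * (a * c ^ (n - 1 - s)) := by
        intro hkj
        rw [hΩpi]
        rw [aux_piFilter A (fun i t => i = ⟨s, hs⟩ → x ∈ t)]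
        have hfac : ∀ i : Fin n, ((A i).filter (fun t => i = ⟨s, hs⟩ → x ∈ t)).card
            = if (i : ℕ) < s then c else if (i : ℕ) = s then a else c := by
          intro i
          by_cases his : i = (⟨s, hs⟩ : Fin n)
          · have hv : (i : ℕ) = s := by rw [his]
            rw [if_neg (by simp [hv]), if_pos hv]
            have he : (A i).filter (fun t => i = ⟨s, hs⟩ → x ∈ t)
                = (A i).filter (fun t => x ∈ t) :=
              Finset.filter_congr (fun t _ => by simp [his])
            rw [he]
            simp only [hA]
            rw [aux_count_mem _ x (hxc i (by rw [his]; exact hkj)) l hl1, hcompl i]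
          · have he : (A i).filter (fun t => i = ⟨s, hs⟩ → x ∈ t) = A i :=
              Finset.filter_true_of_mem (fun t _ hi => absurd hi his)
            rw [he, hAcard i]
            by_cases hlt : (i : ℕ) < s
            · rw [if_pos hlt]
            · rw [if_neg hlt, if_neg (fun hie => his (Fin.ext hie))]
        rw [Finset.prod_congr rfl (fun i _ => hfac i), aux_prod n s hs a c c]
      have hcnt2 : j = (⟨s, hs⟩ : Fin n) →
          (Ω.filter (fun R => ∀ i : Fin n, (i : ℕ) < s → x ∉ R i)).card
            = b ^ s * (c * c ^ (n - 1 - s)) := by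
        intro hjk
        rw [hΩpi]
        rw [aux_piFilter A (fun i t => (i : ℕ) < s → x ∉ t)]
        have hfac : ∀ i : Fin n, ((A i).filter (fun t => (i : ℕ) < s → x ∉ t)).card
            = if (i : ℕ) < s then b else if (i : ℕ) = s then c else c := by
          intro i
          by_cases hlt : (i : ℕ) < s
          · rw [if_pos hlt]
            have hij : i ≠ j := fun he => by rw [he, hjk] at hlt; simp at hlt
            have he : (A i).filter (fun t => (i : ℕ) < s → x ∉ t)
                = (A i).filter (fun t => x ∉ t) :=
              Finset.filter_congr (fun t _ => by simp [hlt])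
            rw [he]
            simp only [hA]
            rw [aux_count_not _ x (hxc i hij) l, hcompl i]
          · rw [if_neg hlt]
            have he : (A i).filter (fun t => (i : ℕ) < s → x ∉ t) = A i :=
              Finset.filter_true_of_mem (fun t _ hi => absurd hi hlt)
            rw [he, hAcard i]
            by_cases hie : (i : ℕ) = s
            · rw [if_pos hie]
            · rw [if_neg hie]
        rw [Finset.prod_congr rfl (fun i _ => hfac i), aux_prod n s hs c b c]
      have hcnt3 : s < (j : ℕ) →
          (Ω.filter (fun R => ∀ i : Fin n,
              ((i : ℕ) < s → x ∉ R i) ∧ (i = ⟨s, hs⟩ → x ∈ R i))).card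
            = b ^ s * (a * c ^ (n - 1 - s)) := by
        intro hjgt
        have hkj : (⟨s, hs⟩ : Fin n) ≠ j := fun he => by
          rw [← he] at hjgt; simp at hjgt
        rw [hΩpi]
        rw [aux_piFilter A (fun i t => ((i : ℕ) < s → x ∉ t) ∧ (i = ⟨s, hs⟩ → x ∈ t))]
        have hfac : ∀ i : Fin n,
            ((A i).filter (fun t => ((i : ℕ) < s → x ∉ t) ∧ (i = ⟨s, hs⟩ → x ∈ t))).card
            = if (i : ℕ) < s then b else if (i : ℕ) = s then a else c := by
          intro i
          by_cases hlt : (i : ℕ) < s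
          · rw [if_pos hlt]
            have hik : i ≠ (⟨s, hs⟩ : Fin n) := fun he => by rw [he] at hlt; simp at hlt
            have hij : i ≠ j := fun he => by
              rw [he] at hlt
              exact absurd (lt_trans hjgt hlt) (lt_irrefl s)
            have he : (A i).filter (fun t => ((i : ℕ) < s → x ∉ t) ∧ (i = ⟨s, hs⟩ → x ∈ t))
                = (A i).filter (fun t => x ∉ t) :=
              Finset.filter_congr (fun t _ => by simp [hlt, hik])
            rw [he]
            simp only [hA]
            rw [aux_count_not _ x (hxc i hij) l, hcompl i]
          · by_cases hie : (i : ℕ) = s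
            · rw [if_neg hlt, if_pos hie]
              have hik : i = (⟨s, hs⟩ : Fin n) := Fin.ext hie
              have he : (A i).filter (fun t => ((i : ℕ) < s → x ∉ t) ∧ (i = ⟨s, hs⟩ → x ∈ t))
                  = (A i).filter (fun t => x ∈ t) := by
                refine Finset.filter_congr (fun t _ => ?_)
                subst hik
                simp
              rw [he]
              simp only [hA]
              rw [aux_count_mem _ x (hxc i (by rw [hik]; exact hkj)) l hl1, hcompl i]
            · rw [if_neg hlt, if_neg hie]
              have hik : i ≠ (⟨s, hs⟩ : Fin n) := fun he => hie (by rw [he])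
              have he : (A i).filter (fun t => ((i : ℕ) < s → x ∉ t) ∧ (i = ⟨s, hs⟩ → x ∈ t))
                  = A i :=
                Finset.filter_true_of_mem (fun t _ =>
                  ⟨fun h' => absurd h' hlt, fun h' => absurd h' hik⟩)
              rw [he, hAcard i]
        rw [Finset.prod_congr rfl (fun i _ => hfac i), aux_prod n s hs a b c]
      rcases lt_trichotomy (j : ℕ) s with hjs | hjs | hjs
      · rw [if_pos hjs]
        have hkj : (⟨s, hs⟩ : Fin n) ≠ j := fun he => by rw [← he] at hjs; simp at hjs
        rw [← hcnt1 hkj]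
        refine congrArg Finset.card (Finset.filter_congr ?_)
        intro R hR
        rw [hmemiff R x]
        constructor
        · rintro ⟨-, h2⟩ i rfl
          rcases h2 with h2 | h2
          · exact absurd h2 (hxnot _ hkj)
          · exact h2
        · intro hall
          exact ⟨⟨j, hjs, Or.inl hxj⟩, Or.inr (hall _ rfl)⟩
      · rw [if_neg (by simp [hjs]), if_pos hjs]
        have hjk : j = (⟨s, hs⟩ : Fin n) := Fin.ext hjs
        have hsplit := Finset.card_filter_add_card_filter_not (s := Ω)
          (p := fun R => x ∈ ((Finset.univ.filter fun i : Fin n => (i : ℕ) < s).biUnion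
            (fun i => B i ∪ R i)) ∩ (B ⟨s, hs⟩ ∪ R ⟨s, hs⟩))
        have hneg : (Ω.filter (fun R =>
            ¬ (x ∈ ((Finset.univ.filter fun i : Fin n => (i : ℕ) < s).biUnion
              (fun i => B i ∪ R i)) ∩ (B ⟨s, hs⟩ ∪ R ⟨s, hs⟩)))).card
            = b ^ s * (c * c ^ (n - 1 - s)) := by
          rw [← hcnt2 hjk]
          refine congrArg Finset.card (Finset.filter_congr ?_)
          intro R hR
          rw [hmemiff R x]
          constructor
          · intro hne i hi hxi
            exact hne ⟨⟨i, hi, Or.inr hxi⟩, Or.inl (hjk ▸ hxj)⟩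
          · rintro hall ⟨⟨i, hi, hxi⟩, -⟩
            rcases hxi with hxi | hxi
            · have hij : i ≠ j := fun he => by rw [he, hjk] at hi; simp at hi
              exact hxnot i hij hxi
            · exact hall i hi hxi
        rw [hneg, hΩcard] at hsplit
        exact Nat.eq_sub_of_add_eq hsplit
      · rw [if_neg (not_lt_of_gt hjs), if_neg (ne_of_gt hjs)]
        have hkj : (⟨s, hs⟩ : Fin n) ≠ j := fun he => by rw [← he] at hjs; simp at hjs
        have hsplit := aux_split Ω (fun R => ∀ i : Fin n, i = ⟨s, hs⟩ → x ∈ R i)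
          (fun R => ∃ i : Fin n, (i : ℕ) < s ∧ x ∈ R i)
        have e3 : Ω.filter (fun R => (∀ i : Fin n, i = ⟨s, hs⟩ → x ∈ R i)
              ∧ ∃ i : Fin n, (i : ℕ) < s ∧ x ∈ R i)
            = Ω.filter (fun R =>
              x ∈ ((Finset.univ.filter fun i : Fin n => (i : ℕ) < s).biUnion
                (fun i => B i ∪ R i)) ∩ (B ⟨s, hs⟩ ∪ R ⟨s, hs⟩)) := by
          refine Finset.filter_congr ?_
          intro R hR
          rw [hmemiff R x]
          constructor
          · rintro ⟨h1, i, hi, hxi⟩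
            exact ⟨⟨i, hi, Or.inr hxi⟩, Or.inr (h1 _ rfl)⟩
          · rintro ⟨⟨i, hi, hxi⟩, h2⟩
            have hxRs : x ∈ R ⟨s, hs⟩ := by
              rcases h2 with h2 | h2
              · exact absurd h2 (hxnot _ hkj)
              · exact h2
            refine ⟨fun i' hi' => by rw [hi']; exact hxRs, i, hi, ?_⟩
            rcases hxi with hxi | hxi
            · have hij : i ≠ j := fun he => by
                rw [he] at hi
                exact absurd (lt_trans hjs hi) (lt_irrefl s)
              exact absurd hxi (hxnot i hij)
            · exact hxi
        have e4 : Ω.filter (fun R => (∀ i : Fin n, i = ⟨s, hs⟩ → x ∈ R i) ∧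
              ¬ ∃ i : Fin n, (i : ℕ) < s ∧ x ∈ R i)
            = Ω.filter (fun R => ∀ i : Fin n,
                ((i : ℕ) < s → x ∉ R i) ∧ (i = ⟨s, hs⟩ → x ∈ R i)) := by
          refine Finset.filter_congr ?_
          intro R _
          constructor
          · rintro ⟨h1, h2⟩ i
            exact ⟨fun hi hxi => h2 ⟨i, hi, hxi⟩, h1 i⟩
          · intro hall
            exact ⟨fun i => (hall i).2, fun ⟨i, hi, hxi⟩ => (hall i).1 hi hxi⟩
        rw [e3, e4, hcnt3 hjs, hcnt1 hkj] at hsplit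
        exact Nat.eq_sub_of_add_eq hsplit
    -- sum over packets
    have hTsum : (∑ x : Fin (n * h), (Ω.filter (fun R =>
          x ∈ ((Finset.univ.filter fun i : Fin n => (i : ℕ) < s).biUnion
            (fun i => B i ∪ R i)) ∩ (B ⟨s, hs⟩ ∪ R ⟨s, hs⟩))).card)
        = s * (h * (c ^ s * (a * c ^ (n - 1 - s))))
          + (h * (c ^ n - b ^ s * (c * c ^ (n - 1 - s)))
            + (n - 1 - s) * (h * (c ^ s * (a * c ^ (n - 1 - s))
              - b ^ s * (a * c ^ (n - 1 - s))))) := by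
      rw [← huniv, Finset.sum_biUnion (fun i _ j _ hij => hBdisj i j hij)]
      have hinner : ∀ j : Fin n, (∑ x ∈ B j, (Ω.filter (fun R =>
            x ∈ ((Finset.univ.filter fun i : Fin n => (i : ℕ) < s).biUnion
              (fun i => B i ∪ R i)) ∩ (B ⟨s, hs⟩ ∪ R ⟨s, hs⟩))).card)
          = h * (if (j : ℕ) < s then c ^ s * (a * c ^ (n - 1 - s))
            else if (j : ℕ) = s then c ^ n - b ^ s * (c * c ^ (n - 1 - s))
            else c ^ s * (a * c ^ (n - 1 - s)) - b ^ s * (a * c ^ (n - 1 - s))) := by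
        intro j
        rw [Finset.sum_congr rfl (fun x hx => hdx x j hx), Finset.sum_const, hBcard,
          smul_eq_mul]
      rw [Finset.sum_congr rfl (fun j _ => hinner j)]
      simp only [mul_ite]
      rw [aux_sum n s hs (h * (c ^ n - b ^ s * (c * c ^ (n - 1 - s))))
        (h * (c ^ s * (a * c ^ (n - 1 - s))))
        (h * (c ^ s * (a * c ^ (n - 1 - s)) - b ^ s * (a * c ^ (n - 1 - s))))]
    -- swap the two summations
    have hswap : (∑ R ∈ Ω, (((Finset.univ.filter fun i : Fin n => (i : ℕ) < s).biUnion
          (fun i => B i ∪ R i)) ∩ (B ⟨s, hs⟩ ∪ R ⟨s, hs⟩)).card)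
        = ∑ x : Fin (n * h), (Ω.filter (fun R =>
            x ∈ ((Finset.univ.filter fun i : Fin n => (i : ℕ) < s).biUnion
              (fun i => B i ∪ R i)) ∩ (B ⟨s, hs⟩ ∪ R ⟨s, hs⟩))).card := by
      calc (∑ R ∈ Ω, (((Finset.univ.filter fun i : Fin n => (i : ℕ) < s).biUnion
              (fun i => B i ∪ R i)) ∩ (B ⟨s, hs⟩ ∪ R ⟨s, hs⟩)).card)
          = ∑ R ∈ Ω, ∑ x : Fin (n * h),
              (if x ∈ ((Finset.univ.filter fun i : Fin n => (i : ℕ) < s).biUnion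
                (fun i => B i ∪ R i)) ∩ (B ⟨s, hs⟩ ∪ R ⟨s, hs⟩) then 1 else 0) := by
            refine Finset.sum_congr rfl fun R _ => ?_
            rw [← Finset.card_filter]
            congr 1
            ext x
            simp
        _ = ∑ x : Fin (n * h), ∑ R ∈ Ω,
              (if x ∈ ((Finset.univ.filter fun i : Fin n => (i : ℕ) < s).biUnion
                (fun i => B i ∪ R i)) ∩ (B ⟨s, hs⟩ ∪ R ⟨s, hs⟩) then 1 else 0) :=
            Finset.sum_comm
        _ = _ := Finset.sum_congr rfl fun x _ => (Finset.card_filter _ _).symm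
    -- pass to the reals
    have hbsc : b ^ s ≤ c ^ s := Nat.pow_le_pow_left hbc s
    have hle3 : b ^ s * (a * c ^ (n - 1 - s)) ≤ c ^ s * (a * c ^ (n - 1 - s)) :=
      Nat.mul_le_mul_right _ hbsc
    have hpow : c ^ s * (c * c ^ (n - 1 - s)) = c ^ n := by
      rw [← pow_succ', ← pow_add, hexpsum]
    have hle2 : b ^ s * (c * c ^ (n - 1 - s)) ≤ c ^ n := by
      rw [← hpow]
      exact Nat.mul_le_mul_right _ hbsc
    have hD : ((n - 1 - s : ℕ) : ℝ) = (n : ℝ) - 1 - s := by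
      rw [Nat.cast_sub hsle, Nat.cast_sub hn1]
      norm_num
    have hc0 : (c : ℝ) ≠ 0 := Nat.cast_ne_zero.mpr hcpos.ne'
    have hmr : ((m : ℕ) : ℝ) = ((n : ℝ) - 1) * h := by
      rw [hm]
      push_cast [Nat.cast_sub hn1]
      ring
    have hm0 : ((n : ℝ) - 1) * (h : ℝ) ≠ 0 := by
      rw [← hmr]
      exact Nat.cast_ne_zero.mpr (by positivity)
    have hmacr : ((n : ℝ) - 1) * h * a = (c : ℝ) * l := by
      have h1 : ((m : ℕ) : ℝ) * a = (c : ℝ) * l := by exact_mod_cast hmac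
      rw [← hmr]
      exact h1
    have hπa : π = (a : ℝ) / c := by
      rw [hπdef, div_eq_div_iff hm0 hc0]
      linear_combination -hmacr
    have hq : (1 : ℝ) - π = (b : ℝ) / c := by
      rw [hπa]
      have h1 : (a : ℝ) + b = c := by exact_mod_cast habc
      field_simp
      linarith
    have hlr : (l : ℝ) = ((n : ℝ) - 1) * h * a / c := by
      rw [eq_div_iff hc0]
      linear_combination -hmacr
    rw [← Nat.cast_sum, hswap, hTsum, hΩcard]
    rw [hlr, hq, hπa]
    push_cast [Nat.cast_sub hle2, Nat.cast_sub hle3, hD]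
    have hpowr : (c : ℝ) ^ n = (c : ℝ) ^ s * ((c : ℝ) * (c : ℝ) ^ (n - 1 - s)) := by
      exact_mod_cast hpow.symm
    rw [hpowr]
    rw [div_pow]
    field_simp
    ring
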